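/- Let {Λ_t} be a family of completely positive trace-preserving maps on the space of 2×2 matrices. If the set of density matrices that are fixed points of every Λ_t has affine dimension at least 1 (i.e., contains two distinct states), then each Λ_t is unital: Λ_t(1) = 1. -/

import Mathlib

open Matrix BigOperators ComplexOrder

def IsDensity {n : Type*} [Fintype n] [DecidableEq n] (ρ : Matrix n n ℂ) : Prop :=
  ρ.PosSemidef ∧ ρ.trace = 1

/-- The Choi matrix of a map on qubit matrices; complete positivity is its
positive semidefiniteness. -/
noncomputable def choi (f : Matrix (Fin 2) (Fin 2) ℂ → Matrix (Fin 2) (Fin 2) ℂ) :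
    Matrix (Fin 2 × Fin 2) (Fin 2 × Fin 2) ℂ :=
  Matrix.of fun p q => f (Matrix.single p.1 q.1 1) p.2 q.2

lemma choi_entry (f : Matrix (Fin 2) (Fin 2) ℂ →ₗ[ℂ] Matrix (Fin 2) (Fin 2) ℂ)
    (M : Matrix (Fin 2) (Fin 2) ℂ) (a b : Fin 2) :
    f M a b = ∑ p : Fin 2, ∑ q : Fin 2, M p q * choi (fun M => f M) (p, a) (q, b) := by
  conv_lhs => rw [Matrix.matrix_eq_sum_single M]
  rw [map_sum]
  simp only [map_sum, Matrix.sum_apply]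
  refine Finset.sum_congr rfl fun p _ => Finset.sum_congr rfl fun q _ => ?_
  have : Matrix.single p q (M p q) = M p q • Matrix.single p q 1 := by
    rw [Matrix.smul_single, smul_eq_mul, mul_one]
  rw [this, _root_.map_smul]
  simp [choi, mul_comm]

lemma choi_pos (f : Matrix (Fin 2) (Fin 2) ℂ →ₗ[ℂ] Matrix (Fin 2) (Fin 2) ℂ)
    (h : (choi (fun M => f M)).PosSemidef) {M : Matrix (Fin 2) (Fin 2) ℂ}
    (hM : M.PosSemidef) : (f M).PosSemidef := by
  set C := choi (fun M => f M) with hC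
  obtain ⟨B, hB⟩ : ∃ B : Matrix (Fin 2) (Fin 2) ℂ, M = Bᴴ * B := by
    open scoped MatrixOrder in exact CStarAlgebra.nonneg_iff_eq_star_mul_self.mp hM.nonneg
  refine Matrix.PosSemidef.of_dotProduct_mulVec_nonneg ?_ ?_
  · -- Hermitian
    have hMH : M.IsHermitian := hM.1
    have hCH : C.IsHermitian := h.1
    ext a b
    rw [Matrix.conjTranspose_apply, choi_entry, choi_entry]
    simp only [star_sum, star_mul']
    rw [Finset.sum_comm]
    refine Finset.sum_congr rfl fun p _ => Finset.sum_congr rfl fun q _ => ?_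
    rw [← Matrix.conjTranspose_apply M, hMH.eq, ← Matrix.conjTranspose_apply C, hCH.eq, mul_comm]
  · intro y
    have hMpq : ∀ p q, M p q = ∑ k : Fin 2, star (B k p) * B k q := by
      intro p q
      rw [hB]
      simp [Matrix.mul_apply, Matrix.conjTranspose_apply]
    have key : star y ⬝ᵥ (f M) *ᵥ y
        = ∑ k : Fin 2, star (fun pa : Fin 2 × Fin 2 => B k pa.1 * y pa.2) ⬝ᵥ
            C *ᵥ (fun pa : Fin 2 × Fin 2 => B k pa.1 * y pa.2) := by
      simp only [dotProduct, Matrix.mulVec, Pi.star_apply, Fintype.sum_prod_type,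
        choi_entry f M, hMpq, ← hC, Finset.sum_mul, Finset.mul_sum, star_mul',
        Fin.sum_univ_two]
      ring
    rw [key]
    exact Finset.sum_nonneg fun k _ => h.dotProduct_mulVec_nonneg _

lemma nonneg_add_eq_zero {a b : ℂ} (ha : 0 ≤ a) (hb : 0 ≤ b) (h : a + b = 0) : a = 0 := by
  have : a ≤ 0 := by
    have : a = -b := by linear_combination h
    rw [this]; exact neg_nonpos.mpr hb
  exact le_antisymm this ha

lemma final_2x2 (τ : Matrix (Fin 2) (Fin 2) ℂ) (hH : τ.IsHermitian) (htr : τ.trace = 0)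
    (h1 : (Matrix.diagonal ![2, 0] + τ).PosSemidef)
    (h2 : (Matrix.diagonal ![0, 2] + τ).PosSemidef) : τ = 0 := by
  have h10 : τ 1 0 = star (τ 0 1) := by
    conv_lhs => rw [← hH.eq]
    rw [Matrix.conjTranspose_apply]
  have htr' : τ 0 0 + τ 1 1 = 0 := by
    simpa [Matrix.trace, Fin.sum_univ_two] using htr
  have q1 : (0:ℂ) ≤ τ 1 1 := by
    have := h1.dotProduct_mulVec_nonneg ![0, 1]
    simpa [dotProduct, Matrix.mulVec, Fin.sum_univ_two, Matrix.diagonal] using this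
  have q2 : (0:ℂ) ≤ τ 0 0 := by
    have := h2.dotProduct_mulVec_nonneg ![1, 0]
    simpa [dotProduct, Matrix.mulVec, Fin.sum_univ_two, Matrix.diagonal] using this
  have h00 : τ 0 0 = 0 := nonneg_add_eq_zero q2 q1 htr'
  have h11 : τ 1 1 = 0 := by linear_combination htr' - h00
  set a := τ 0 1 with ha
  have q3 : (0:ℂ) ≤ -(a * star a) / 2 := by
    have := h2.dotProduct_mulVec_nonneg ![1, -(star a) / 2]
    simp only [dotProduct, Matrix.mulVec, Fin.sum_univ_two, Matrix.add_apply,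
      Matrix.diagonal_apply, Pi.star_apply, Matrix.cons_val_zero, Matrix.cons_val_one,
      Matrix.head_cons] at this
    norm_num at this
    rw [h00, h10, h11, ← ha] at this
    convert this using 1
    simp only [Complex.star_def]
    ring
  have haz : a * star a = 0 := by
    have h4 : (0:ℂ) ≤ a * star a := by
      have := mul_star_self_nonneg a
      simpa using this
    have h5 : a * star a ≤ 0 := by
      have := q3
      have : (0:ℂ) ≤ -(a * star a) := by
        have h2' : (0:ℂ) ≤ 2 := by norm_num
        calc (0:ℂ) = 2 * 0 := by ring
        _ ≤ 2 * (-(a * star a)/2) := by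
            exact mul_le_mul_of_nonneg_left q3 h2'
        _ = -(a * star a) := by ring
      exact neg_nonneg.mp this
    exact le_antisymm h5 h4
  have ha0 : a = 0 := by
    have h6 : (Complex.normSq a : ℂ) = 0 := by
      rw [← Complex.mul_conj]; exact haz
    have h7 : Complex.normSq a = 0 := by exact_mod_cast h6
    exact Complex.normSq_eq_zero.mp h7
  ext i j
  fin_cases i <;> fin_cases j <;>
    simp [h00, h11, ← ha, ha0, h10]

/-- If a family of CPTP qubit maps has at least two distinct fixed density matrices
(i.e. the fixed-point set has affine dimension at least one), then each map of the
family is unital. -/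
theorem cptp_qubit_fixed_points_unital {ι : Type*}
    (Λ : ι → (Matrix (Fin 2) (Fin 2) ℂ →ₗ[ℂ] Matrix (Fin 2) (Fin 2) ℂ))
    (hCP : ∀ i, (choi (fun M => Λ i M)).PosSemidef)
    (hTP : ∀ i M, ((Λ i) M).trace = M.trace)
    (ρ₁ ρ₂ : Matrix (Fin 2) (Fin 2) ℂ)
    (hρ₁ : IsDensity ρ₁) (hρ₂ : IsDensity ρ₂) (hne : ρ₁ ≠ ρ₂)
    (hfix₁ : ∀ i, Λ i ρ₁ = ρ₁) (hfix₂ : ∀ i, Λ i ρ₂ = ρ₂) :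
    ∀ i, Λ i 1 = 1 := by
  intro i
  set δ : Matrix (Fin 2) (Fin 2) ℂ := ρ₁ - ρ₂ with hδdef
  have hδH : δ.IsHermitian := hρ₁.1.1.sub hρ₂.1.1
  have hδne : δ ≠ 0 := sub_ne_zero.mpr hne
  have hδtr : δ.trace = 0 := by
    rw [hδdef, Matrix.trace_sub, hρ₁.2, hρ₂.2, sub_self]
  have hLδ : Λ i δ = δ := by
    rw [hδdef, map_sub, hfix₁ i, hfix₂ i]
  set U : Matrix (Fin 2) (Fin 2) ℂ := ↑hδH.eigenvectorUnitary with hUdef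
  set μ : Fin 2 → ℝ := hδH.eigenvalues with hμdef
  set D : Matrix (Fin 2) (Fin 2) ℂ := Matrix.diagonal (Complex.ofReal ∘ μ) with hDdef
  have hU1 : star U * U = 1 := Unitary.coe_star_mul_self hδH.eigenvectorUnitary
  have hU2 : U * star U = 1 := Unitary.coe_mul_star_self hδH.eigenvectorUnitary
  have hspec : δ = U * D * star U := by
    have h := hδH.spectral_theorem
    rw [show (RCLike.ofReal : ℝ → ℂ) = Complex.ofReal from rfl] at h
    exact h
  -- trace of D
  have htrD : D.trace = 0 := by
    have : δ.trace = D.trace := by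
      rw [hspec, Matrix.trace_mul_cycle, hU1, one_mul]
    rw [← this, hδtr]
  have hμsum : μ 0 + μ 1 = 0 := by
    rw [hDdef, Matrix.trace_diagonal, Fin.sum_univ_two] at htrD
    simp only [Function.comp_apply] at htrD
    rw [← Complex.ofReal_add, Complex.ofReal_eq_zero] at htrD
    exact htrD
  have hμ1 : μ 1 = -μ 0 := by linarith
  have hμ0 : μ 0 ≠ 0 := by
    intro h0
    apply hδne
    have hD0 : D = 0 := by
      rw [hDdef]
      have : (Complex.ofReal ∘ μ : Fin 2 → ℂ) = fun _ => 0 := by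
        funext j
        fin_cases j <;> simp [h0, hμ1]
      rw [this]
      exact Matrix.diagonal_zero
    rw [hspec, hD0, Matrix.mul_zero, Matrix.zero_mul]
  set c : ℂ := (↑(μ 0) : ℂ)⁻¹ with hcdef
  have hc0 : c * ((μ 0 : ℝ) : ℂ) = 1 := by
    rw [hcdef]
    exact inv_mul_cancel₀ (by exact_mod_cast hμ0)
  have hc1 : c * ((μ 1 : ℝ) : ℂ) = -1 := by
    have : ((μ 1 : ℝ) : ℂ) = -((μ 0 : ℝ) : ℂ) := by
      rw [hμ1]; push_cast; ring
    rw [this, mul_neg, hc0]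
  have hdiagA : (1 : Matrix (Fin 2) (Fin 2) ℂ) + c • D = Matrix.diagonal ![2, 0] := by
    ext a b
    fin_cases a <;> fin_cases b <;>
      norm_num [hDdef, Matrix.one_apply, Matrix.diagonal_apply, hc0, hc1]
  have hdiagB : (1 : Matrix (Fin 2) (Fin 2) ℂ) - c • D = Matrix.diagonal ![0, 2] := by
    ext a b
    fin_cases a <;> fin_cases b <;>
      norm_num [hDdef, Matrix.one_apply, Matrix.diagonal_apply, hc0, hc1]
  -- positivity of the two rank-one operators
  have hpsd2 : (Matrix.diagonal ![(2:ℂ), 0]).PosSemidef := by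
    rw [Matrix.posSemidef_diagonal_iff]
    intro j
    fin_cases j <;> norm_num
  have hpsd2' : (Matrix.diagonal ![(0:ℂ), 2]).PosSemidef := by
    rw [Matrix.posSemidef_diagonal_iff]
    intro j
    fin_cases j <;> norm_num
  have hconj : ∀ E : Matrix (Fin 2) (Fin 2) ℂ, E.PosSemidef → (U * E * star U).PosSemidef := by
    intro E hE
    rw [Matrix.star_eq_conjTranspose]
    exact hE.mul_mul_conjTranspose_same U
  have hApsd : ((1 : Matrix (Fin 2) (Fin 2) ℂ) + c • δ).PosSemidef := by
    have h1 : (1 : Matrix (Fin 2) (Fin 2) ℂ) + c • δ = U * Matrix.diagonal ![2, 0] * star U := by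
      calc (1 : Matrix (Fin 2) (Fin 2) ℂ) + c • δ
          = U * star U + c • (U * D * star U) := by rw [hU2, ← hspec]
        _ = U * ((1 + c • D) * star U) := by
            simp only [Matrix.add_mul, Matrix.mul_add, Matrix.one_mul, Matrix.smul_mul,
              Matrix.mul_smul, Matrix.mul_assoc]
        _ = U * Matrix.diagonal ![2, 0] * star U := by rw [hdiagA, Matrix.mul_assoc]
    rw [h1]
    exact hconj _ hpsd2
  have hBpsd : ((1 : Matrix (Fin 2) (Fin 2) ℂ) - c • δ).PosSemidef := by
    have h1 : (1 : Matrix (Fin 2) (Fin 2) ℂ) - c • δ = U * Matrix.diagonal ![0, 2] * star U := by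
      calc (1 : Matrix (Fin 2) (Fin 2) ℂ) - c • δ
          = U * star U - c • (U * D * star U) := by rw [hU2, ← hspec]
        _ = U * ((1 - c • D) * star U) := by
            simp only [Matrix.sub_mul, Matrix.mul_sub, Matrix.one_mul, Matrix.smul_mul,
              Matrix.mul_smul, Matrix.mul_assoc]
        _ = U * Matrix.diagonal ![0, 2] * star U := by rw [hdiagB, Matrix.mul_assoc]
    rw [h1]
    exact hconj _ hpsd2'
  -- θ and τ
  set θ : Matrix (Fin 2) (Fin 2) ℂ := Λ i 1 - 1 with hθdef
  have hL1psd : (Λ i 1).PosSemidef := choi_pos (Λ i) (hCP i) Matrix.PosSemidef.one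
  have hθH : θ.IsHermitian := hL1psd.1.sub Matrix.isHermitian_one
  have hθtr : θ.trace = 0 := by
    rw [hθdef, Matrix.trace_sub, hTP i 1, sub_self]
  have hLA : Λ i ((1 : Matrix (Fin 2) (Fin 2) ℂ) + c • δ)
      = ((1 : Matrix (Fin 2) (Fin 2) ℂ) + c • δ) + θ := by
    rw [map_add, _root_.map_smul, hLδ, hθdef]
    abel
  have hLB : Λ i ((1 : Matrix (Fin 2) (Fin 2) ℂ) - c • δ)
      = ((1 : Matrix (Fin 2) (Fin 2) ℂ) - c • δ) + θ := by
    rw [map_sub, _root_.map_smul, hLδ, hθdef]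
    abel
  have hPSDA : (((1 : Matrix (Fin 2) (Fin 2) ℂ) + c • δ) + θ).PosSemidef := by
    rw [← hLA]
    exact choi_pos (Λ i) (hCP i) hApsd
  have hPSDB : (((1 : Matrix (Fin 2) (Fin 2) ℂ) - c • δ) + θ).PosSemidef := by
    rw [← hLB]
    exact choi_pos (Λ i) (hCP i) hBpsd
  set τ : Matrix (Fin 2) (Fin 2) ℂ := star U * θ * U with hτdef
  have hτH : τ.IsHermitian := by
    have : τᴴ = τ := by
      rw [hτdef, Matrix.star_eq_conjTranspose, Matrix.conjTranspose_mul,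
        Matrix.conjTranspose_mul, Matrix.conjTranspose_conjTranspose, hθH.eq,
        Matrix.mul_assoc]
    exact this
  have hτtr : τ.trace = 0 := by
    rw [hτdef, Matrix.trace_mul_cycle, hU2, Matrix.one_mul, hθtr]
  have hconj' : ∀ E : Matrix (Fin 2) (Fin 2) ℂ, E.PosSemidef → (star U * E * U).PosSemidef := by
    intro E hE
    have := hE.mul_mul_conjTranspose_same (star U)
    rwa [Matrix.star_eq_conjTranspose, Matrix.conjTranspose_conjTranspose,
      ← Matrix.star_eq_conjTranspose] at this
  have hconjA : star U * (((1 : Matrix (Fin 2) (Fin 2) ℂ) + c • δ) + θ) * U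
      = Matrix.diagonal ![2, 0] + τ := by
    have h1 : (1 : Matrix (Fin 2) (Fin 2) ℂ) + c • δ = U * Matrix.diagonal ![2, 0] * star U := by
      calc (1 : Matrix (Fin 2) (Fin 2) ℂ) + c • δ
          = U * star U + c • (U * D * star U) := by rw [hU2, ← hspec]
        _ = U * ((1 + c • D) * star U) := by
            simp only [Matrix.add_mul, Matrix.mul_add, Matrix.one_mul, Matrix.smul_mul,
              Matrix.mul_smul, Matrix.mul_assoc]
        _ = U * Matrix.diagonal ![2, 0] * star U := by rw [hdiagA, Matrix.mul_assoc]
    rw [h1, hτdef, Matrix.mul_add, Matrix.add_mul]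
    congr 1
    calc star U * (U * Matrix.diagonal ![2, 0] * star U) * U
        = (star U * U) * Matrix.diagonal ![2, 0] * (star U * U) := by
          simp only [Matrix.mul_assoc]
      _ = Matrix.diagonal ![2, 0] := by rw [hU1, Matrix.one_mul, Matrix.mul_one]
  have hconjB : star U * (((1 : Matrix (Fin 2) (Fin 2) ℂ) - c • δ) + θ) * U
      = Matrix.diagonal ![0, 2] + τ := by
    have h1 : (1 : Matrix (Fin 2) (Fin 2) ℂ) - c • δ = U * Matrix.diagonal ![0, 2] * star U := by
      calc (1 : Matrix (Fin 2) (Fin 2) ℂ) - c • δ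
          = U * star U - c • (U * D * star U) := by rw [hU2, ← hspec]
        _ = U * ((1 - c • D) * star U) := by
            simp only [Matrix.sub_mul, Matrix.mul_sub, Matrix.one_mul, Matrix.smul_mul,
              Matrix.mul_smul, Matrix.mul_assoc]
        _ = U * Matrix.diagonal ![0, 2] * star U := by rw [hdiagB, Matrix.mul_assoc]
    rw [h1, hτdef, Matrix.mul_add, Matrix.add_mul]
    congr 1
    calc star U * (U * Matrix.diagonal ![0, 2] * star U) * U
        = (star U * U) * Matrix.diagonal ![0, 2] * (star U * U) := by
          simp only [Matrix.mul_assoc]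
      _ = Matrix.diagonal ![0, 2] := by rw [hU1, Matrix.one_mul, Matrix.mul_one]
  have hτ1 : (Matrix.diagonal ![(2:ℂ), 0] + τ).PosSemidef := by
    rw [← hconjA]; exact hconj' _ hPSDA
  have hτ2 : (Matrix.diagonal ![(0:ℂ), 2] + τ).PosSemidef := by
    rw [← hconjB]; exact hconj' _ hPSDB
  have hτ0 : τ = 0 := final_2x2 τ hτH hτtr hτ1 hτ2
  have hθ0 : θ = 0 := by
    have : θ = U * τ * star U := by
      rw [hτdef]
      calc θ = (U * star U) * θ * (U * star U) := by rw [hU2, Matrix.one_mul, Matrix.mul_one]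
        _ = U * (star U * θ * U) * star U := by simp only [Matrix.mul_assoc]
    rw [this, hτ0, Matrix.mul_zero, Matrix.zero_mul]
  have := hθ0
  rw [hθdef] at this
  exact sub_eq_zero.mp this
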